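/- Let n and r be positive integers and let F ⊆ {1,2,…,n}. For every natural number k, the number of words w = (w_0, w_1, …, w_n) ∈ {0,1,…,r−1}^{n+1} satisfying w_0 = w_n = 0, w_{i−1} = w_i for every i ∈ {1,…,n} \ F, and having exactly k ascents, equals the coefficient of X^{rk} in the polynomial (1 + X + X^2 + ... + X^{r−1})^{|F|} ∈ ℤ[X]. -/
import Mathlib


open scoped Classical

noncomputable section

/-- Value of a word `w : Fin (n+1) → ℕ` at a natural index (junk value `0` out of range). -/
def wv {n : ℕ} (w : Fin (n + 1) → ℕ) (k : ℕ) : ℕ :=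
  if h : k < n + 1 then w ⟨k, h⟩ else 0

/-- The number of ascents of a word `w = (w_0, w_1, …, w_n)`, i.e. the number of indices
`i ∈ {0,…,n-1}` with `w_i < w_{i+1}`. -/
def asc {n : ℕ} (w : Fin (n + 1) → ℕ) : ℕ :=
  ((Finset.range n).filter fun i => wv w i < wv w (i + 1)).card

/-- The set `S(n,r)` of Smirnov words `w = (w_0, …, w_n) ∈ {0,…,r-1}^{n+1}` with
`w_0 = w_n = 0` and no two consecutive entries equal. -/
def smirnov (n r : ℕ) : Finset (Fin (n + 1) → ℕ) :=
  (Fintype.piFinset fun _ => Finset.range r).filter fun w =>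
    wv w 0 = 0 ∧ wv w n = 0 ∧ ∀ i < n, wv w i ≠ wv w (i + 1)

/-- `k ∈ {1,…,n-1}` is a double ascent of `w` if `w_{k-1} < w_k < w_{k+1}`. -/
def doubleAscent {n : ℕ} (w : Fin (n + 1) → ℕ) (k : ℕ) : Prop :=
  1 ≤ k ∧ k < n ∧ wv w (k - 1) < wv w k ∧ wv w k < wv w (k + 1)

/-- `k ∈ {1,…,n-1}` is a double descent of `w` if `w_{k-1} > w_k > w_{k+1}`. -/
def doubleDescent {n : ℕ} (w : Fin (n + 1) → ℕ) (k : ℕ) : Prop :=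
  1 ≤ k ∧ k < n ∧ wv w k < wv w (k - 1) ∧ wv w (k + 1) < wv w k

/-- `w` has the matching property: for every double ascent `k` of `w` there is a double
descent `ℓ > k` with `w_k = w_ℓ` and `w_k ≤ w_j` for all `k < j < ℓ`. -/
def hasMatching {n : ℕ} (w : Fin (n + 1) → ℕ) : Prop :=
  ∀ k, doubleAscent w k →
    ∃ l, k < l ∧ doubleDescent w l ∧ wv w k = wv w l ∧
      ∀ j, k < j → j < l → wv w k ≤ wv w j

/-- difference sequence of a word -/
def aval (r : ℕ) {n : ℕ} (w : Fin (n + 1) → ℕ) (i : ℕ) : ℕ :=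
  if wv w (i - 1) < wv w i then wv w (i - 1) + r - wv w i else wv w (i - 1) - wv w i

/-- reconstruct a word from a difference sequence -/
def wfrom (r : ℕ) (a : ℕ → ℕ) : ℕ → ℕ
  | 0 => 0
  | (i + 1) => (wfrom r a i + (r - a (i + 1))) % r

theorem M2 {r x y : ℕ} (hx : x < r) (hy : y < r) :
    (x + (r - (if x < y then x + r - y else x - y))) % r = y := by
  split
  · have : x + (r - (x + r - y)) = y := by omega
    rw [this, Nat.mod_eq_of_lt hy]
  · have : x + (r - (x - y)) = y + r := by omega
    rw [this, Nat.add_mod_right, Nat.mod_eq_of_lt hy]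

theorem M1 {r x a : ℕ} (hx : x < r) (ha : a < r) :
    (if x < (x + (r - a)) % r then x + r - (x + (r - a)) % r
      else x - (x + (r - a)) % r) = a := by
  rcases Nat.lt_or_ge x a with h | h
  · have : (x + (r - a)) % r = x + r - a := by
      rw [Nat.mod_eq_of_lt (by omega)]; omega
    rw [this]; split <;> omega
  · have : (x + (r - a)) % r = x - a := by
      have h1 : x + (r - a) = (x - a) + r := by omega
      rw [h1, Nat.add_mod_right, Nat.mod_eq_of_lt (by omega)]
    rw [this]; split <;> omega

/-- telescoping identity -/
theorem teleA (r : ℕ) {n : ℕ} (w : Fin (n + 1) → ℕ) (hv : ∀ j, wv w j < r) (m : ℕ) :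
    (∑ i ∈ Finset.range m, aval r w (i + 1)) + wv w m
      = wv w 0 + r * ((Finset.range m).filter fun i => wv w i < wv w (i + 1)).card := by
  induction m with
  | zero => simp
  | succ m ih =>
    rw [Finset.sum_range_succ, Finset.range_add_one, Finset.filter_insert]
    have hm1 : (m + 1 : ℕ) - 1 = m := rfl
    have hv1 := hv m
    have hv2 := hv (m + 1)
    by_cases h : wv w m < wv w (m + 1)
    · rw [if_pos h]
      rw [Finset.card_insert_of_notMem (by simp)]
      have : aval r w (m + 1) = wv w m + r - wv w (m + 1) := by
        unfold aval; rw [hm1, if_pos h]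
      have hms : r * (((Finset.range m).filter fun i => wv w i < wv w (i + 1)).card + 1)
          = r * ((Finset.range m).filter fun i => wv w i < wv w (i + 1)).card + r := by ring
      omega
    · rw [if_neg h]
      have : aval r w (m + 1) = wv w m - wv w (m + 1) := by
        unfold aval; rw [hm1, if_neg h]
      omega

theorem wfrom_lt (r : ℕ) (hr : 0 < r) (a : ℕ → ℕ) : ∀ i, wfrom r a i < r
  | 0 => hr
  | (_ + 1) => Nat.mod_lt _ hr

theorem wv_psi {n : ℕ} (r : ℕ) (l : ℕ → ℕ) (j : ℕ) (hj : j ≤ n) :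
    wv (fun j : Fin (n + 1) => wfrom r l j) j = wfrom r l j := by
  unfold wv; rw [dif_pos (by omega)]

theorem aval_psi {n : ℕ} (r : ℕ) (hr : 0 < r) (l : ℕ → ℕ) (hl : ∀ i, l i < r)
    (i : ℕ) (hi : i < n) :
    aval r (fun j : Fin (n + 1) => wfrom r l j) (i + 1) = l (i + 1) := by
  unfold aval
  have hm1 : (i + 1 : ℕ) - 1 = i := rfl
  rw [hm1, wv_psi r l i (by omega), wv_psi r l (i + 1) (by omega)]
  have : wfrom r l (i + 1) = (wfrom r l i + (r - l (i + 1))) % r := rfl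
  rw [this]
  exact M1 (wfrom_lt r hr l i) (hl (i + 1))

theorem rhs_card (r N : ℕ) (F : Finset ℕ) :
    ((∑ j ∈ Finset.range r, (Polynomial.X : Polynomial ℤ) ^ j) ^ F.card).coeff N
      = ((F.finsuppAntidiag N).filter fun l => ∀ i ∈ F, l i < r).card := by
  classical
  have hq : ∀ d : ℕ, (∑ j ∈ Finset.range r, (Polynomial.X : Polynomial ℤ) ^ j).coeff d
      = if d < r then 1 else 0 := by
    intro d
    rw [Polynomial.finset_sum_coeff]
    simp only [Polynomial.coeff_X_pow]
    rw [Finset.sum_ite_eq (Finset.range r) d (fun _ => (1:ℤ))]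
    simp [Finset.mem_range]
  rw [← Finset.prod_const]
  have : ((∏ _i ∈ F, ∑ j ∈ Finset.range r, (Polynomial.X : Polynomial ℤ) ^ j)).coeff N
      = ∑ l ∈ Finset.finsuppAntidiag F N,
          ∏ i ∈ F, (∑ j ∈ Finset.range r, (Polynomial.X : Polynomial ℤ) ^ j).coeff (l i) := by
    have h := PowerSeries.coeff_prod
      (fun _ : ℕ => ((∑ j ∈ Finset.range r, (Polynomial.X : Polynomial ℤ) ^ j : Polynomial ℤ) :
        PowerSeries ℤ)) N F
    rw [show (∏ _j ∈ F, ((∑ j ∈ Finset.range r, (Polynomial.X : Polynomial ℤ) ^ j : Polynomial ℤ) :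
          PowerSeries ℤ))
        = ((∏ _j ∈ F, (∑ j ∈ Finset.range r, (Polynomial.X : Polynomial ℤ) ^ j) : Polynomial ℤ) :
          PowerSeries ℤ) by
      simp only [← Polynomial.coeToPowerSeries.ringHom_apply, map_prod]] at h
    simpa only [Polynomial.coeff_coe] using h
  rw [this]
  simp only [hq]
  rw [Finset.sum_congr rfl (fun l _ => Finset.prod_boole), Finset.sum_boole]

theorem card_restricted_words_eq_coeff (n r : ℕ) (hn : 0 < n) (hr : 0 < r)
    (F : Finset ℕ) (hF : F ⊆ Finset.Icc 1 n) (k : ℕ) :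
    (((Fintype.piFinset fun _ : Fin (n + 1) => Finset.range r).filter fun w =>
          wv w 0 = 0 ∧ wv w n = 0 ∧
            (∀ i ∈ Finset.Icc 1 n, i ∉ F → wv w (i - 1) = wv w i) ∧
            asc w = k).card : ℤ) =
      ((∑ j ∈ Finset.range r, (Polynomial.X : Polynomial ℤ) ^ j) ^ F.card).coeff (r * k) := by
  classical
  rw [rhs_card]
  have hFr : F ⊆ Finset.range (n + 1) := fun i hi => by
    have := hF hi; simp only [Finset.mem_Icc] at this; simp [Finset.mem_range]; omega
  have h0F : (0 : ℕ) ∉ F := fun h => by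
    have := hF h; simp only [Finset.mem_Icc] at this; omega
  set S₁ := (Fintype.piFinset fun _ : Fin (n + 1) => Finset.range r).filter fun w =>
      wv w 0 = 0 ∧ wv w n = 0 ∧
        (∀ i ∈ Finset.Icc 1 n, i ∉ F → wv w (i - 1) = wv w i) ∧ asc w = k with hS₁
  set S₂ := (F.finsuppAntidiag (r * k)).filter fun l => ∀ i ∈ F, l i < r with hS₂
  -- the forward map
  have hΦsupp : ∀ w : Fin (n + 1) → ℕ, ∀ a : ℕ,
      (if a ∈ F then aval r w a else 0) ≠ 0 → a ∈ F := by
    intro w a ha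
    by_cases h : a ∈ F
    · exact h
    · simp [h] at ha
  set Φ : (Fin (n + 1) → ℕ) → (ℕ →₀ ℕ) := fun w =>
    Finsupp.onFinset F (fun i => if i ∈ F then aval r w i else 0) (hΦsupp w) with hΦ
  set Ψ : (ℕ →₀ ℕ) → (Fin (n + 1) → ℕ) := fun l (j : Fin (n + 1)) => wfrom r l j with hΨ
  -- facts about words in S₁
  have hS₁fact : ∀ w ∈ S₁, (∀ j, wv w j < r) ∧ (∀ i, aval r w i < r) ∧
      (∀ i ∈ Finset.range (n + 1), i ∉ F → aval r w i = 0) ∧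
      (∑ i ∈ F, aval r w i = r * k) := by
    intro w hw
    simp only [hS₁, Finset.mem_filter] at hw
    obtain ⟨hpi, hw0, hwn, hcon, hasc⟩ := hw
    rw [Fintype.mem_piFinset] at hpi
    have hv : ∀ j, wv w j < r := by
      intro j
      unfold wv
      split
      · exact Finset.mem_range.mp (hpi _)
      · exact hr
    have havlt : ∀ i, aval r w i < r := by
      intro i
      have h1 := hv (i - 1); have h2 := hv i
      unfold aval; split <;> omega
    have hav0 : ∀ i ∈ Finset.range (n + 1), i ∉ F → aval r w i = 0 := by
      intro i hi hiF
      match i with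
      | 0 => simp [aval]
      | (m + 1) =>
        have hmem : m + 1 ∈ Finset.Icc 1 n := by
          simp only [Finset.mem_range] at hi; simp only [Finset.mem_Icc]; omega
        have := hcon (m + 1) hmem hiF
        unfold aval
        have hm1 : (m + 1 : ℕ) - 1 = m := rfl
        rw [hm1] at this ⊢
        rw [this]
        simp
    refine ⟨hv, havlt, hav0, ?_⟩
    have h1 : ∑ i ∈ Finset.range (n + 1), aval r w i = ∑ i ∈ F, aval r w i :=
      (Finset.sum_subset hFr (fun i hi hni => hav0 i hi hni)).symm
    have h2 : ∑ i ∈ Finset.range (n + 1), aval r w i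
        = (∑ i ∈ Finset.range n, aval r w (i + 1)) + aval r w 0 :=
      Finset.sum_range_succ' _ n
    have h3 := teleA r w hv n
    unfold asc at hasc
    rw [hasc] at h3
    have h4 : aval r w 0 = 0 := by simp [aval]
    omega
  -- facts about finsupps in S₂
  have hS₂fact : ∀ l ∈ S₂, (∀ i, l i < r) ∧ (∀ i, i ∉ F → l i = 0) ∧
      (∑ i ∈ F, l i = r * k) := by
    intro l hl
    rw [hS₂, Finset.mem_filter, Finset.mem_finsuppAntidiag] at hl
    obtain ⟨⟨hsum, hsupp⟩, hlt⟩ := hl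
    have hz : ∀ i, i ∉ F → l i = 0 := by
      intro i hi
      by_contra h
      exact hi (hsupp (Finsupp.mem_support_iff.mpr h))
    refine ⟨fun i => ?_, hz, hsum⟩
    by_cases h : i ∈ F
    · exact hlt i h
    · rw [hz i h]; exact hr
  -- facts about Ψ l for l ∈ S₂
  have hΨfact : ∀ l ∈ S₂, (∀ j ≤ n, wv (Ψ l) j = wfrom r l j) ∧
      wv (Ψ l) 0 = 0 ∧ wv (Ψ l) n = 0 ∧ asc (Ψ l) = k ∧
      (∀ i, i < n → aval r (Ψ l) (i + 1) = l (i + 1)) := by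
    intro l hl
    obtain ⟨hlt, hz, hsum⟩ := hS₂fact l hl
    have hwv : ∀ j ≤ n, wv (Ψ l) j = wfrom r (⇑l) j := fun j hj => wv_psi r (⇑l) j hj
    have hv' : ∀ j, wv (Ψ l) j < r := by
      intro j
      unfold wv
      split
      · exact wfrom_lt r hr _ _
      · exact hr
    have haval : ∀ i, i < n → aval r (Ψ l) (i + 1) = l (i + 1) :=
      fun i hi => aval_psi r hr (⇑l) hlt i hi
    have h0 : wv (Ψ l) 0 = 0 := by rw [hwv 0 (by omega)]; rfl
    have htel := teleA r (Ψ l) hv' n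
    have hsum2 : ∑ i ∈ Finset.range n, aval r (Ψ l) (i + 1) = r * k := by
      rw [Finset.sum_congr rfl (fun i hi => haval i (Finset.mem_range.mp hi))]
      have e1 : ∑ i ∈ Finset.range (n + 1), l i = ∑ i ∈ F, l i :=
        (Finset.sum_subset hFr (fun i _ hni => hz i hni)).symm
      have e2 : ∑ i ∈ Finset.range (n + 1), l i
          = (∑ i ∈ Finset.range n, l (i + 1)) + l 0 := Finset.sum_range_succ' _ n
      have e3 : l 0 = 0 := hz 0 h0F
      omega
    rw [hsum2, h0] at htel
    -- r * k + wv (Ψ l) n = r * (asc count)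
    have hvn : wv (Ψ l) n < r := hv' n
    have hacount : ((Finset.range n).filter fun i => wv (Ψ l) i < wv (Ψ l) (i + 1)).card = k := by
      set c := ((Finset.range n).filter fun i => wv (Ψ l) i < wv (Ψ l) (i + 1)).card with hc
      rcases Nat.lt_trichotomy c k with h | h | h
      · have := Nat.mul_le_mul_left r (show c + 1 ≤ k by omega)
        rw [Nat.mul_add, Nat.mul_one] at this
        omega
      · exact h
      · have := Nat.mul_le_mul_left r (show k + 1 ≤ c by omega)
        rw [Nat.mul_add, Nat.mul_one] at this
        omega
    have hn0 : wv (Ψ l) n = 0 := by rw [hacount] at htel; omega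
    exact ⟨hwv, h0, hn0, by unfold asc; exact hacount, haval⟩
  -- Φ maps S₁ into S₂
  have hmap1 : ∀ w ∈ S₁, Φ w ∈ S₂ := by
    intro w hw
    obtain ⟨hv, havlt, hav0, hsum⟩ := hS₁fact w hw
    rw [hS₂, Finset.mem_filter, Finset.mem_finsuppAntidiag]
    refine ⟨⟨?_, Finsupp.support_onFinset_subset⟩, ?_⟩
    · rw [show F.sum ⇑(Φ w) = ∑ i ∈ F, (if i ∈ F then aval r w i else 0) from rfl]
      rw [Finset.sum_congr rfl (fun i hi => if_pos hi)]
      exact hsum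
    · intro i hi
      rw [show (Φ w) i = if i ∈ F then aval r w i else 0 from rfl, if_pos hi]
      exact havlt i
  -- Ψ maps S₂ into S₁
  have hmap2 : ∀ l ∈ S₂, Ψ l ∈ S₁ := by
    intro l hl
    obtain ⟨hlt, hz, hsum⟩ := hS₂fact l hl
    obtain ⟨hwv, h0, hn0, hasc, haval⟩ := hΨfact l hl
    simp only [hS₁, Finset.mem_filter]
    refine ⟨?_, h0, hn0, ?_, hasc⟩
    · rw [Fintype.mem_piFinset]
      intro j
      exact Finset.mem_range.mpr (wfrom_lt r hr _ _)
    · intro i hi hiF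
      simp only [Finset.mem_Icc] at hi
      obtain ⟨m, rfl⟩ : ∃ m, i = m + 1 := ⟨i - 1, by omega⟩
      have hm1 : (m + 1 : ℕ) - 1 = m := rfl
      rw [hm1, hwv m (by omega), hwv (m + 1) (by omega)]
      have : wfrom r (⇑l) (m + 1) = (wfrom r (⇑l) m + (r - l (m + 1))) % r := rfl
      rw [this, hz (m + 1) hiF, Nat.sub_zero, Nat.add_mod_right,
        Nat.mod_eq_of_lt (wfrom_lt r hr _ _)]
  -- Ψ ∘ Φ = id on S₁
  have hinv1 : ∀ w ∈ S₁, Ψ (Φ w) = w := by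
    intro w hw
    obtain ⟨hv, havlt, hav0, hsum⟩ := hS₁fact w hw
    have hcon : ∀ i ∈ Finset.Icc 1 n, i ∉ F → wv w (i - 1) = wv w i := by
      simp only [hS₁, Finset.mem_filter] at hw; exact hw.2.2.2.1
    have hw0 : wv w 0 = 0 := by
      simp only [hS₁, Finset.mem_filter] at hw; exact hw.2.1
    have key : ∀ m, m ≤ n → wfrom r (⇑(Φ w)) m = wv w m := by
      intro m
      induction m with
      | zero => intro _; rw [show wfrom r (⇑(Φ w)) 0 = 0 from rfl, hw0]
      | succ m ih =>
        intro hm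
        have e1 : wfrom r (⇑(Φ w)) (m + 1)
            = (wfrom r (⇑(Φ w)) m + (r - (Φ w) (m + 1))) % r := rfl
        rw [e1, ih (by omega)]
        rw [show (Φ w) (m + 1) = if m + 1 ∈ F then aval r w (m + 1) else 0 from rfl]
        by_cases h : m + 1 ∈ F
        · rw [if_pos h]
          have hm1 : (m + 1 : ℕ) - 1 = m := rfl
          unfold aval
          rw [hm1]
          exact M2 (hv m) (hv (m + 1))
        · rw [if_neg h]
          have : wv w m = wv w (m + 1) := by
            have := hcon (m + 1) (by simp only [Finset.mem_Icc]; omega) h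
            rwa [show (m + 1 : ℕ) - 1 = m from rfl] at this
          rw [Nat.sub_zero, Nat.add_mod_right, Nat.mod_eq_of_lt (hv m), this]
    funext j
    rw [hΨ]
    show wfrom r (⇑(Φ w)) j = w j
    rw [key j (by omega)]
    unfold wv
    rw [dif_pos j.isLt]
  -- Φ ∘ Ψ = id on S₂
  have hinv2 : ∀ l ∈ S₂, Φ (Ψ l) = l := by
    intro l hl
    obtain ⟨hlt, hz, hsum⟩ := hS₂fact l hl
    obtain ⟨hwv, h0, hn0, hasc, haval⟩ := hΨfact l hl
    ext i
    rw [show (Φ (Ψ l)) i = if i ∈ F then aval r (Ψ l) i else 0 from rfl]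
    by_cases h : i ∈ F
    · rw [if_pos h]
      have hi := hF h
      simp only [Finset.mem_Icc] at hi
      obtain ⟨m, rfl⟩ : ∃ m, i = m + 1 := ⟨i - 1, by omega⟩
      exact haval m (by omega)
    · rw [if_neg h, hz i h]
  have hcard : S₁.card = S₂.card := Finset.card_nbij' Φ Ψ hmap1 hmap2 hinv1 hinv2
  rw [hcard]
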